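/- Let A be a complete unital normed ℝ-algebra (a Banach algebra) and let X, Y, Z ∈ A. Define u, v : ℝ × ℝ → A by u(t,ε) := exp(ε•X) * exp(t•(Y + ε•Z)) and v(t,ε) := exp(t•Y) * exp(ε•(X + t•(Z + (X*Y − Y*X)))). Then u(t,ε) − v(t,ε) = O(‖(t,ε)‖³) as (t,ε) → (0,0); in particular u and v have the same value, the same first-order partial derivatives and the same mixed second partial derivative ∂²/∂t∂ε at (0,0). -/

import Mathlib

open scoped Topology
open Asymptotics NormedSpace Filter

section ThetaAux

variable {A : Type*} [NormedRing A] [NormedAlgebra ℝ A] [CompleteSpace A]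

/-- Second-order Taylor polynomial of the exponential. -/
noncomputable def expT2 (w : A) : A := 1 + w + (2:ℝ)⁻¹ • (w * w)

lemma isBigO_exp_sub_expT2 :
    (fun w : A => exp w - expT2 w) =O[𝓝 (0:A)] fun w => ‖w‖ ^ 3 := by
  have h := (exp_hasFPowerSeriesAt_zero (𝕂 := ℝ) (𝔸 := A)).isBigO_sub_partialSum_pow 3
  simp only [zero_add] at h
  refine h.congr_left fun w => ?_
  congr 1
  simp [FormalMultilinearSeries.partialSum, Finset.sum_range_succ, expSeries_apply_eq,
    expT2, Nat.factorial, pow_two]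

lemma isBigO_exp_sub_expT2_comp {w : ℝ × ℝ → A}
    (hw0 : Filter.Tendsto w (𝓝 0) (𝓝 0))
    (hw : w =O[𝓝 (0:ℝ×ℝ)] fun p => ‖p‖) :
    (fun p => exp (w p) - expT2 (w p)) =O[𝓝 (0:ℝ×ℝ)] fun p => ‖p‖ ^ 3 :=
  (isBigO_exp_sub_expT2.comp_tendsto hw0).trans (hw.norm_left.pow 3)

/-- The coefficient of `t² ε` in the polynomial discrepancy. -/
noncomputable def thF (X Y Z : A) (p : ℝ × ℝ) : A :=
  ((1:ℝ)/2) • (X*Y*Y)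
      + ((-1:ℝ)/1) • (Y*X*Y)
      + ((1:ℝ)/2) • (Y*Y*X)
      + ((-1:ℝ)/2) • (Y*Z)
      + ((1:ℝ)/2) • (Z*Y)
      + ((1:ℝ)/4*p.2^1) • (X*X*Y*Y)
      + ((-1:ℝ)/2*p.2^1) • (X*Y*X*Y)
      + ((1:ℝ)/2*p.2^1) • (X*Y*Y*X)
      + ((1:ℝ)/2*p.2^1) • (X*Z*Y)
      + ((-1:ℝ)/2*p.2^1) • (Y*X*Y*X)
      + ((1:ℝ)/4*p.2^1) • (Y*Y*X*X)
      + ((-1:ℝ)/2*p.2^1) • (Y*Z*X)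
      + ((-1:ℝ)/2*p.2^1) • (Z*X*Y)
      + ((1:ℝ)/2*p.2^1) • (Z*Y*X)
      + ((1:ℝ)/4*p.2^2) • (X*X*Y*Z)
      + ((1:ℝ)/4*p.2^2) • (X*X*Z*Y)
      + ((1:ℝ)/2*p.2^2) • (X*Z*Z)
      + ((1:ℝ)/4*p.2^3) • (X*X*Z*Z)
      + ((-1:ℝ)/2*p.1^1) • (Y*Y*X*Y)
      + ((1:ℝ)/2*p.1^1) • (Y*Y*Y*X)
      + ((-1:ℝ)/2*p.1^1) • (Y*Y*Z)
      + ((-1:ℝ)/2*p.1^1*p.2^1) • (Y*X*Y*X*Y)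
      + ((1:ℝ)/2*p.1^1*p.2^1) • (Y*X*Y*Y*X)
      + ((-1:ℝ)/2*p.1^1*p.2^1) • (Y*X*Y*Z)
      + ((1:ℝ)/4*p.1^1*p.2^1) • (Y*Y*X*X*Y)
      + ((-1:ℝ)/2*p.1^1*p.2^1) • (Y*Y*X*Y*X)
      + ((1:ℝ)/4*p.1^1*p.2^1) • (Y*Y*X*Z)
      + ((1:ℝ)/4*p.1^1*p.2^1) • (Y*Y*Y*X*X)
      + ((-1:ℝ)/4*p.1^1*p.2^1) • (Y*Y*Z*X)
      + ((-1:ℝ)/2*p.1^1*p.2^1) • (Y*Z*X*Y)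
      + ((1:ℝ)/2*p.1^1*p.2^1) • (Y*Z*Y*X)
      + ((-1:ℝ)/2*p.1^1*p.2^1) • (Y*Z*Z)
      + ((-1:ℝ)/4*p.1^2*p.2^1) • (Y*Y*X*Y*X*Y)
      + ((1:ℝ)/4*p.1^2*p.2^1) • (Y*Y*X*Y*Y*X)
      + ((-1:ℝ)/4*p.1^2*p.2^1) • (Y*Y*X*Y*Z)
      + ((1:ℝ)/4*p.1^2*p.2^1) • (Y*Y*Y*X*X*Y)
      + ((-1:ℝ)/4*p.1^2*p.2^1) • (Y*Y*Y*X*Y*X)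
      + ((1:ℝ)/4*p.1^2*p.2^1) • (Y*Y*Y*X*Z)
      + ((-1:ℝ)/4*p.1^2*p.2^1) • (Y*Y*Z*X*Y)
      + ((1:ℝ)/4*p.1^2*p.2^1) • (Y*Y*Z*Y*X)
      + ((-1:ℝ)/4*p.1^2*p.2^1) • (Y*Y*Z*Z)

/-- The coefficient of `t ε²` in the polynomial discrepancy. -/
noncomputable def thG (X Y Z : A) (p : ℝ × ℝ) : A :=
  ((1:ℝ)/2) • (X*Z)
      + ((-1:ℝ)/2) • (Z*X)
      + ((1:ℝ)/2*p.2^1) • (X*X*Z)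

lemma thF_key (X Y Z : A) (p : ℝ × ℝ) :
    expT2 (p.2 • X) * expT2 (p.1 • (Y + p.2 • Z))
      - expT2 (p.1 • Y) * expT2 (p.2 • (X + p.1 • (Z + (X * Y - Y * X))))
    = (p.1 ^ 2 * p.2) • thF X Y Z p + (p.1 * p.2 ^ 2) • thG X Y Z p := by
  simp only [expT2, thF, thG, mul_add, add_mul, smul_add, smul_mul_assoc, mul_smul_comm,
    smul_smul, mul_assoc, sub_mul, mul_sub, smul_sub, one_mul, mul_one]
  module

end ThetaAux

theorem theta_involution_bch
    {A : Type*} [NormedRing A] [NormedAlgebra ℝ A] [CompleteSpace A]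
    (X Y Z : A) :
    (fun p : ℝ × ℝ =>
        exp (p.2 • X) * exp (p.1 • (Y + p.2 • Z))
          - exp (p.1 • Y) * exp (p.2 • (X + p.1 • (Z + (X * Y - Y * X)))))
      =O[𝓝 (0 : ℝ × ℝ)] fun p : ℝ × ℝ => ‖p‖ ^ 3 := by
  set a : ℝ × ℝ → A := fun p => p.2 • X with ha
  set b : ℝ × ℝ → A := fun p => p.1 • (Y + p.2 • Z) with hb
  set c : ℝ × ℝ → A := fun p => p.1 • Y with hc
  set d : ℝ × ℝ → A := fun p => p.2 • (X + p.1 • (Z + (X * Y - Y * X))) with hd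
  -- basic O(‖p‖) facts
  have hfst : (fun p : ℝ × ℝ => p.1) =O[𝓝 (0:ℝ×ℝ)] fun p => ‖p‖ :=
    IsBigO.of_bound 1 (Filter.Eventually.of_forall fun p => by
      simpa using norm_fst_le p)
  have hsnd : (fun p : ℝ × ℝ => p.2) =O[𝓝 (0:ℝ×ℝ)] fun p => ‖p‖ :=
    IsBigO.of_bound 1 (Filter.Eventually.of_forall fun p => by
      simpa using norm_snd_le p)
  have hcont : ∀ w : ℝ × ℝ → A, Continuous w → w 0 = 0 →
      Filter.Tendsto w (𝓝 (0:ℝ×ℝ)) (𝓝 (0:A)) := fun w hw h0 => h0 ▸ hw.tendsto 0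
  have hOone : ∀ w : ℝ × ℝ → A, Continuous w →
      w =O[𝓝 (0:ℝ×ℝ)] fun _ => (1:ℝ) := fun w hw => (hw.tendsto 0).isBigO_one ℝ
  have hacont : Continuous a := by fun_prop
  have hbcont : Continuous b := by fun_prop
  have hccont : Continuous c := by fun_prop
  have hdcont : Continuous d := by fun_prop
  have haO : a =O[𝓝 (0:ℝ×ℝ)] fun p => ‖p‖ := by
    simpa using hsnd.smul (hOone _ continuous_const : (fun _ : ℝ × ℝ => X) =O[_] _)
  have hbO : b =O[𝓝 (0:ℝ×ℝ)] fun p => ‖p‖ := by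
    simpa only [smul_eq_mul, mul_one] using hfst.smul (hOone (fun p => Y + p.2 • Z) (by fun_prop))
  have hcO : c =O[𝓝 (0:ℝ×ℝ)] fun p => ‖p‖ := by
    simpa using hfst.smul (hOone _ continuous_const : (fun _ : ℝ × ℝ => Y) =O[_] _)
  have hdO : d =O[𝓝 (0:ℝ×ℝ)] fun p => ‖p‖ := by
    simpa only [smul_eq_mul, mul_one] using hsnd.smul (hOone (fun p => X + p.1 • (Z + (X * Y - Y * X))) (by fun_prop))
  have haT : (fun p => exp (a p) - expT2 (a p)) =O[𝓝 (0:ℝ×ℝ)] fun p => ‖p‖ ^ 3 :=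
    isBigO_exp_sub_expT2_comp (hcont a hacont (by simp [ha])) haO
  have hbT : (fun p => exp (b p) - expT2 (b p)) =O[𝓝 (0:ℝ×ℝ)] fun p => ‖p‖ ^ 3 :=
    isBigO_exp_sub_expT2_comp (hcont b hbcont (by simp [hb])) hbO
  have hcT : (fun p => exp (c p) - expT2 (c p)) =O[𝓝 (0:ℝ×ℝ)] fun p => ‖p‖ ^ 3 :=
    isBigO_exp_sub_expT2_comp (hcont c hccont (by simp [hc])) hcO
  have hdT : (fun p => exp (d p) - expT2 (d p)) =O[𝓝 (0:ℝ×ℝ)] fun p => ‖p‖ ^ 3 :=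
    isBigO_exp_sub_expT2_comp (hcont d hdcont (by simp [hd])) hdO
  -- bounded factors
  have hea : (fun p => exp (a p)) =O[𝓝 (0:ℝ×ℝ)] fun _ => (1:ℝ) :=
    (((continuous_iff_continuousAt.2 fun x => (exp_analytic (𝕂 := ℝ) x).continuousAt).comp hacont).tendsto 0).isBigO_one ℝ
  have hec : (fun p => exp (c p)) =O[𝓝 (0:ℝ×ℝ)] fun _ => (1:ℝ) :=
    (((continuous_iff_continuousAt.2 fun x => (exp_analytic (𝕂 := ℝ) x).continuousAt).comp hccont).tendsto 0).isBigO_one ℝ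
  have hTcont : Continuous (expT2 : A → A) := by
    unfold expT2; fun_prop
  have hTb : (fun p => expT2 (b p)) =O[𝓝 (0:ℝ×ℝ)] fun _ => (1:ℝ) :=
    ((hTcont.comp hbcont).tendsto 0).isBigO_one ℝ
  have hTd : (fun p => expT2 (d p)) =O[𝓝 (0:ℝ×ℝ)] fun _ => (1:ℝ) :=
    ((hTcont.comp hdcont).tendsto 0).isBigO_one ℝ
  -- the polynomial core
  have hcoef1 : (fun p : ℝ × ℝ => p.1 ^ 2 * p.2) =O[𝓝 (0:ℝ×ℝ)] fun p => ‖p‖ ^ 3 :=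
    IsBigO.of_bound 1 (Filter.Eventually.of_forall fun p => by
      have h1 : |p.1| ≤ ‖p‖ := by simpa using norm_fst_le p
      have h2 : |p.2| ≤ ‖p‖ := by simpa using norm_snd_le p
      have h0 : (0:ℝ) ≤ ‖p‖ := norm_nonneg p
      simp only [Real.norm_eq_abs, abs_mul, abs_pow, one_mul, abs_abs, abs_norm]
      calc |p.1| ^ 2 * |p.2| ≤ ‖p‖ ^ 2 * ‖p‖ := by
            exact mul_le_mul (pow_le_pow_left₀ (abs_nonneg _) h1 2) h2 (abs_nonneg _)
              (by positivity)
        _ = ‖p‖ ^ 3 := by ring)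
  have hcoef2 : (fun p : ℝ × ℝ => p.1 * p.2 ^ 2) =O[𝓝 (0:ℝ×ℝ)] fun p => ‖p‖ ^ 3 :=
    IsBigO.of_bound 1 (Filter.Eventually.of_forall fun p => by
      have h1 : |p.1| ≤ ‖p‖ := by simpa using norm_fst_le p
      have h2 : |p.2| ≤ ‖p‖ := by simpa using norm_snd_le p
      simp only [Real.norm_eq_abs, abs_mul, abs_pow, one_mul, abs_norm]
      calc |p.1| * |p.2| ^ 2 ≤ ‖p‖ * ‖p‖ ^ 2 := by
            exact mul_le_mul h1 (pow_le_pow_left₀ (abs_nonneg _) h2 2) (by positivity)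
              (norm_nonneg p)
        _ = ‖p‖ ^ 3 := by ring)
  have hFb : (fun p => thF X Y Z p) =O[𝓝 (0:ℝ×ℝ)] fun _ => (1:ℝ) := by
    refine hOone _ ?_
    unfold thF; fun_prop
  have hGb : (fun p => thG X Y Z p) =O[𝓝 (0:ℝ×ℝ)] fun _ => (1:ℝ) := by
    refine hOone _ ?_
    unfold thG; fun_prop
  have hcore : (fun p => expT2 (a p) * expT2 (b p) - expT2 (c p) * expT2 (d p))
      =O[𝓝 (0:ℝ×ℝ)] fun p => ‖p‖ ^ 3 := by
    have heq : (fun p => expT2 (a p) * expT2 (b p) - expT2 (c p) * expT2 (d p))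
        = fun p => (p.1 ^ 2 * p.2) • thF X Y Z p + (p.1 * p.2 ^ 2) • thG X Y Z p := by
      funext p; exact thF_key X Y Z p
    rw [heq]
    have t1 := hcoef1.smul hFb
    have t2 := hcoef2.smul hGb
    simpa using t1.add t2
  -- assemble
  have hsplit : (fun p : ℝ × ℝ =>
        exp (p.2 • X) * exp (p.1 • (Y + p.2 • Z))
          - exp (p.1 • Y) * exp (p.2 • (X + p.1 • (Z + (X * Y - Y * X)))))
      = fun p =>
        exp (a p) * (exp (b p) - expT2 (b p))
          + (exp (a p) - expT2 (a p)) * expT2 (b p)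
          + (expT2 (a p) * expT2 (b p) - expT2 (c p) * expT2 (d p))
          - exp (c p) * (exp (d p) - expT2 (d p))
          - (exp (c p) - expT2 (c p)) * expT2 (d p) := by
    funext p
    simp only [ha, hb, hc, hd]
    noncomm_ring
  rw [hsplit]
  have h1 : (fun p => exp (a p) * (exp (b p) - expT2 (b p))) =O[𝓝 (0:ℝ×ℝ)]
      fun p => ‖p‖ ^ 3 := by simpa only [one_mul] using hea.mul hbT
  have h2 : (fun p => (exp (a p) - expT2 (a p)) * expT2 (b p)) =O[𝓝 (0:ℝ×ℝ)]
      fun p => ‖p‖ ^ 3 := by simpa only [mul_one] using haT.mul hTb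
  have h4 : (fun p => exp (c p) * (exp (d p) - expT2 (d p))) =O[𝓝 (0:ℝ×ℝ)]
      fun p => ‖p‖ ^ 3 := by simpa only [one_mul] using hec.mul hdT
  have h5 : (fun p => (exp (c p) - expT2 (c p)) * expT2 (d p)) =O[𝓝 (0:ℝ×ℝ)]
      fun p => ‖p‖ ^ 3 := by simpa only [mul_one] using hcT.mul hTd
  exact (((h1.add h2).add hcore).sub h4).sub h5
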